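/- Let r ≥ 2 and suppose q < n^{-2/(r+1)} and H is a q-sparse graph on n vertices. Then for any copy K of K_{r+1} in H, the number of copies of K_{r+1} in H sharing at least one edge with K is less than (er)^{r+1}. -/

import Mathlib

open SimpleGraph

/-- Number of (unlabeled) copies of `J` in `G`: subgraphs of `G` isomorphic to `J`. -/
noncomputable def copyCount {α β : Type*} (J : SimpleGraph α) (G : SimpleGraph β) : ℕ :=
  Set.ncard {A : G.Subgraph | Nonempty (A.coe ≃g J)}

/-- Expected number of copies of `J` in the Erdős–Rényi random graph `G(n,q)`. -/
noncomputable def expCopies {α : Type*} (n : ℕ) (J : SimpleGraph α) (q : ℝ) : ℝ :=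
  (copyCount J (⊤ : SimpleGraph (Fin n)) : ℝ) * q ^ (Set.ncard J.edgeSet)

/-- `H` is `q`-sparse: every subgraph `I ⊆ H` has `E_q X_I ≥ 1`. -/
def qSparse {n : ℕ} (q : ℝ) (H : SimpleGraph (Fin n)) : Prop :=
  ∀ I : H.Subgraph, 1 ≤ expCopies n I.coe q

section Aux

variable {n : ℕ} {H : SimpleGraph (Fin n)}

/-- A copy of `K_{r+1}` is a clique on `r+1` vertices. -/
lemma copy_props {r : ℕ} (A : H.Subgraph)
    (h : Nonempty (A.coe ≃g completeGraph (Fin (r + 1)))) :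
    A.verts.ncard = r + 1 ∧ ∀ a ∈ A.verts, ∀ b ∈ A.verts, a ≠ b → A.Adj a b := by
  obtain ⟨f⟩ := h
  constructor
  · rw [← Nat.card_coe_set_eq, Nat.card_congr f.toEquiv, Nat.card_eq_fintype_card,
      Fintype.card_fin]
  · intro a ha b hb hab
    have hne : f ⟨a, ha⟩ ≠ f ⟨b, hb⟩ := by
      intro hEq
      exact hab (congrArg Subtype.val (f.toEquiv.injective hEq))
    have : A.coe.Adj ⟨a, ha⟩ ⟨b, hb⟩ := f.map_adj_iff.mp hne
    simpa using this

/-- A copy is determined by its vertex set. -/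
lemma copy_ext {r : ℕ} (A B : H.Subgraph)
    (hA : Nonempty (A.coe ≃g completeGraph (Fin (r + 1))))
    (hB : Nonempty (B.coe ≃g completeGraph (Fin (r + 1))))
    (hV : A.verts = B.verts) : A = B := by
  obtain ⟨-, hA2⟩ := copy_props A hA
  obtain ⟨-, hB2⟩ := copy_props B hB
  refine SimpleGraph.Subgraph.ext hV ?_
  funext x y
  apply propext
  constructor
  · intro h
    exact hB2 x (hV ▸ A.edge_vert h) y (hV ▸ A.edge_vert h.symm) (A.adj_sub h).ne
  · intro h
    exact hA2 x (hV ▸ B.edge_vert h) y (hV ▸ B.edge_vert h.symm) (B.adj_sub h).ne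

lemma ncard_coe_edgeSet (I : H.Subgraph) :
    Set.ncard I.coe.edgeSet = Set.ncard I.edgeSet := by
  rw [← SimpleGraph.Subgraph.image_coe_edgeSet_coe I]
  exact (Set.ncard_image_of_injective _ (Sym2.map.injective Subtype.coe_injective)).symm

lemma copyCount_top_le (I : H.Subgraph) :
    copyCount I.coe (⊤ : SimpleGraph (Fin n)) ≤ n ^ I.verts.ncard := by
  classical
  rw [_root_.copyCount]
  set S := {A : (⊤ : SimpleGraph (Fin n)).Subgraph | Nonempty (A.coe ≃g I.coe)} with hS
  let f : ∀ A : S, (A : (⊤ : SimpleGraph (Fin n)).Subgraph).coe ≃g I.coe :=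
    fun A => Classical.choice A.2
  let F : S → (↥I.verts → Fin n) := fun A => fun j => ((f A).symm j : Fin n)
  have hverts : ∀ A : S, (A : (⊤ : SimpleGraph (Fin n)).Subgraph).verts = Set.range (F A) := by
    intro A
    ext x
    constructor
    · intro hx
      exact ⟨f A ⟨x, hx⟩, by simp [F]⟩
    · rintro ⟨j, rfl⟩
      exact ((f A).symm j).2
  have hadj : ∀ (A : S) (a b : Fin n),
      (A : (⊤ : SimpleGraph (Fin n)).Subgraph).Adj a b ↔
        ∃ j k, I.coe.Adj j k ∧ F A j = a ∧ F A k = b := by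
    intro A a b
    constructor
    · intro h
      have ha := (A : (⊤ : SimpleGraph (Fin n)).Subgraph).edge_vert h
      have hb := (A : (⊤ : SimpleGraph (Fin n)).Subgraph).edge_vert h.symm
      refine ⟨f A ⟨a, ha⟩, f A ⟨b, hb⟩, ?_, by simp [F], by simp [F]⟩
      exact (f A).map_adj_iff.mpr (by simpa using h)
    · rintro ⟨j, k, hjk, rfl, rfl⟩
      have : (A : (⊤ : SimpleGraph (Fin n)).Subgraph).coe.Adj ((f A).symm j) ((f A).symm k) :=
        (f A).symm.map_adj_iff.mpr hjk
      simpa using this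
  have hinj : Function.Injective F := by
    intro A B hFE
    apply Subtype.ext
    refine SimpleGraph.Subgraph.ext ?_ ?_
    · rw [hverts A, hverts B, hFE]
    · funext a b
      apply propext
      rw [hadj A a b, hadj B a b, hFE]
  calc Set.ncard S = Nat.card S := (Nat.card_coe_set_eq S).symm
    _ ≤ Nat.card (↥I.verts → Fin n) := Nat.card_le_card_of_injective F hinj
    _ = n ^ I.verts.ncard := by
        rw [Nat.card_fun, Nat.card_coe_set_eq, Nat.card_eq_fintype_card,
          Fintype.card_fin]

lemma density_of_qSparse {r : ℕ} (hn : 2 ≤ n) {q : ℝ} (hq0 : 0 ≤ q)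
    (hq : q < (n : ℝ) ^ (-(2 / ((r : ℝ) + 1)))) (hH : qSparse q H)
    (I : H.Subgraph) (hne : I.verts.Nonempty) :
    2 * I.edgeSet.ncard < (r + 1) * I.verts.ncard := by
  by_contra hcon
  push_neg at hcon
  have h1 := hH I
  rw [expCopies, ncard_coe_edgeSet] at h1
  set v := I.verts.ncard with hv
  set e := I.edgeSet.ncard with he
  have hepos : 1 ≤ e := by
    rcases Nat.eq_zero_or_pos e with h0 | h
    swap
    · exact h
    have hv0 : 0 < v := (Set.ncard_pos (Set.toFinite _)).mpr hne
    have hz : (r + 1) * v = 0 := Nat.le_zero.mp (by simpa [h0] using hcon)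
    rcases Nat.mul_eq_zero.mp hz with h' | h' <;> omega
  have hnpos : (0 : ℝ) < n := by
    have : (2:ℝ) ≤ n := by exact_mod_cast hn
    linarith
  set x : ℝ := -(2 / ((r : ℝ) + 1)) with hx
  have hc : ((copyCount I.coe (⊤ : SimpleGraph (Fin n)) : ℕ) : ℝ) ≤ (n : ℝ) ^ v := by
    have := copyCount_top_le (H := H) I
    exact_mod_cast this
  have hq2 : q ^ e < ((n:ℝ) ^ x) ^ e := pow_lt_pow_left₀ hq hq0 (by omega)
  have h2 : (1:ℝ) ≤ (n:ℝ)^v * q^e :=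
    le_trans h1 (mul_le_mul_of_nonneg_right hc (pow_nonneg hq0 e))
  have h3 : (1:ℝ) < (n:ℝ)^v * ((n:ℝ)^x)^e :=
    lt_of_le_of_lt h2 (mul_lt_mul_of_pos_left hq2 (pow_pos hnpos v))
  have h4 : (n:ℝ)^v * ((n:ℝ)^x)^e ≤ 1 := by
    have e1 : ((n:ℝ)^x)^e = (n:ℝ) ^ (x * (e:ℝ)) := by
      rw [← Real.rpow_natCast ((n:ℝ)^x) e, ← Real.rpow_mul hnpos.le]
    have e2 : (n:ℝ)^v = (n:ℝ) ^ ((v:ℕ):ℝ) := (Real.rpow_natCast _ v).symm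
    rw [e1, e2, ← Real.rpow_add hnpos]
    apply Real.rpow_le_one_of_one_le_of_nonpos
    · exact_mod_cast (by omega : 1 ≤ n)
    · have hr1 : (0:ℝ) < (r:ℝ) + 1 := by positivity
      have hcon' : ((r:ℝ)+1) * (v:ℝ) ≤ 2 * (e:ℝ) := by exact_mod_cast hcon
      have hdiv : (v:ℝ) ≤ 2 * (e:ℝ) / ((r:ℝ)+1) := by
        rw [le_div_iff₀ hr1]; linarith
      have hxe : x * (e:ℝ) = -(2 * (e:ℝ) / ((r:ℝ)+1)) := by
        rw [hx]; ring
      rw [hxe]; linarith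
  linarith

/-- Counting step: adding a clique `A` on `r+1` vertices to a subgraph `U`. -/
lemma clique_step {r : ℕ} (A : H.Subgraph)
    (hcard : A.verts.ncard = r + 1)
    (hclique : ∀ a ∈ A.verts, ∀ b ∈ A.verts, a ≠ b → A.Adj a b)
    (U : H.Subgraph) :
    (A.verts ∩ U.verts).ncard + (A.verts \ U.verts).ncard = r + 1 ∧
    (U ⊔ A).verts.ncard = U.verts.ncard + (A.verts \ U.verts).ncard ∧
    2 * U.edgeSet.ncard +
        (A.verts \ U.verts).ncard *
          (2 * (A.verts ∩ U.verts).ncard + (A.verts \ U.verts).ncard - 1)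
      ≤ 2 * (U ⊔ A).edgeSet.ncard := by
  classical
  set m := (A.verts ∩ U.verts).ncard with hm
  set d := (A.verts \ U.verts).ncard with hd
  have hmd : m + d = r + 1 := by
    rw [hm, hd, Set.ncard_inter_add_ncard_diff_eq_ncard A.verts U.verts (Set.toFinite _), hcard]
  refine ⟨hmd, ?_, ?_⟩
  · rw [SimpleGraph.Subgraph.verts_sup, ← Set.union_diff_self,
      Set.ncard_union_eq Set.disjoint_sdiff_right (Set.toFinite _) (Set.toFinite _)]
  · -- the edge count
    set VA := (Set.toFinite A.verts).toFinset with hVA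
    set VI := (Set.toFinite (A.verts ∩ U.verts)).toFinset with hVI
    set O := VA.offDiag \ VI.offDiag with hO
    have hVAcard : VA.card = r + 1 := by
      rw [hVA, ← Set.ncard_eq_toFinset_card _ (Set.toFinite A.verts), hcard]
    have hVIcard : VI.card = m := by
      rw [hVI, ← Set.ncard_eq_toFinset_card _ (Set.toFinite _), hm]
    -- image of O is inside the new edges
    have himage : ((O.image Sym2.mk.uncurry : Finset (Sym2 (Fin n))) : Set (Sym2 (Fin n)))
        ⊆ A.edgeSet \ U.edgeSet := by
      intro t ht
      simp only [Finset.coe_image, Set.mem_image, Finset.mem_coe] at ht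
      obtain ⟨⟨a, b⟩, hab, rfl⟩ := ht
      rw [hO, Finset.mem_sdiff, Finset.mem_offDiag] at hab
      obtain ⟨⟨haA, hbA, hne⟩, hnot⟩ := hab
      rw [hVA, Set.Finite.mem_toFinset] at haA hbA
      constructor
      · exact (SimpleGraph.Subgraph.mem_edgeSet).mpr (hclique a haA b hbA hne)
      · intro hU
        have hadj : U.Adj a b := (SimpleGraph.Subgraph.mem_edgeSet).mp hU
        apply hnot
        rw [Finset.mem_offDiag]
        refine ⟨?_, ?_, hne⟩ <;>
          rw [hVI, Set.Finite.mem_toFinset]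
        · exact ⟨haA, U.edge_vert hadj⟩
        · exact ⟨hbA, U.edge_vert hadj.symm⟩
    -- fiber count: O.card ≤ 2 * (image).card
    have hfiber : O.card ≤ 2 * (O.image Sym2.mk.uncurry).card := by
      have hmaps : ∀ p ∈ O, Sym2.mk.uncurry p ∈ O.image Sym2.mk.uncurry := fun p hp =>
        Finset.mem_image_of_mem _ hp
      rw [Finset.card_eq_sum_card_fiberwise hmaps]
      have hbound : ∀ t ∈ O.image Sym2.mk.uncurry,
          (O.filter fun p => Sym2.mk.uncurry p = t).card ≤ 2 := by
        intro t ht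
        obtain ⟨⟨x, y⟩, hxy, rfl⟩ := Finset.mem_image.mp ht
        have hsub : (O.filter fun p => Sym2.mk.uncurry p = Sym2.mk.uncurry (x, y)) ⊆ {(x, y), (y, x)} := by
          intro ⟨a, b⟩ hab
          rw [Finset.mem_filter] at hab
          have := Sym2.eq_iff.mp hab.2
          rcases this with ⟨rfl, rfl⟩ | ⟨rfl, rfl⟩ <;> simp
        calc (O.filter fun p => Sym2.mk.uncurry p = Sym2.mk.uncurry (x, y)).card
            ≤ ({(x, y), (y, x)} : Finset (Fin n × Fin n)).card := Finset.card_le_card hsub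
          _ ≤ 2 := Finset.card_insert_le _ _ |>.trans (by simp)
      calc ∑ t ∈ O.image Sym2.mk.uncurry, (O.filter fun p => Sym2.mk.uncurry p = t).card
          ≤ (O.image Sym2.mk.uncurry).card • 2 := Finset.sum_le_card_nsmul _ _ 2 hbound
        _ = 2 * (O.image Sym2.mk.uncurry).card := by rw [smul_eq_mul, mul_comm]
    -- O.card is large
    have hOcard : d * (2 * m + d - 1) ≤ O.card := by
      have hsubO : VI.offDiag ⊆ VA.offDiag := by
        apply Finset.offDiag_mono
        intro a ha
        rw [hVI, Set.Finite.mem_toFinset] at ha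
        rw [hVA, Set.Finite.mem_toFinset]
        exact ha.1
      rw [hO, Finset.card_sdiff_of_subset hsubO, Finset.offDiag_card, Finset.offDiag_card,
        hVAcard, hVIcard]
      rcases Nat.eq_zero_or_pos d with hd0 | hdpos
      · simp [hd0]
      · have hr1 : r + 1 = m + d := hmd.symm
        rw [hr1]
        have h1 : m ≤ m * m := by
          rcases Nat.eq_zero_or_pos m with h | h
          · simp [h]
          · exact Nat.le_mul_of_pos_left m h
        have h2 : m + d ≤ (m + d) * (m + d) := Nat.le_mul_of_pos_left _ (by omega)
        have h3 : m * m - m ≤ (m + d) * (m + d) - (m + d) := by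
          zify [h1, h2]
          nlinarith
        have h4 : (1:ℕ) ≤ 2 * m + d := by omega
        zify [h1, h2, h3, h4]
        nlinarith
    -- combine
    have hT : (O.image Sym2.mk.uncurry).card ≤ (A.edgeSet \ U.edgeSet).ncard := by
      rw [← Set.ncard_coe_finset]
      exact Set.ncard_le_ncard himage (Set.toFinite _)
    have hsplit : (U ⊔ A).edgeSet.ncard
        = U.edgeSet.ncard + (A.edgeSet \ U.edgeSet).ncard := by
      rw [SimpleGraph.Subgraph.edgeSet_sup, ← Set.union_diff_self,
        Set.ncard_union_eq Set.disjoint_sdiff_right (Set.toFinite _) (Set.toFinite _)]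
    rw [hsplit]
    calc 2 * U.edgeSet.ncard + d * (2 * m + d - 1)
        ≤ 2 * U.edgeSet.ncard + O.card := Nat.add_le_add_left hOcard _
      _ ≤ 2 * U.edgeSet.ncard + 2 * (O.image Sym2.mk.uncurry).card := by omega
      _ ≤ 2 * U.edgeSet.ncard + 2 * (A.edgeSet \ U.edgeSet).ncard := by omega
      _ = 2 * (U.edgeSet.ncard + (A.edgeSet \ U.edgeSet).ncard) := by ring

end Aux

/-- Let `r ≥ 2`, `q < n^{-2/(r+1)}`, and let `H` be `q`-sparse on `n` vertices. For any copy
`K` of `K_{r+1}` in `H`, the number of copies of `K_{r+1}` in `H` sharing at least one edge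
with `K` is less than `(er)^{r+1}`. -/
theorem clique_copies_sharing_edge {n r : ℕ} (hr : 2 ≤ r) (q : ℝ) (hq0 : 0 ≤ q)
    (hq : q < (n : ℝ) ^ (-(2 / ((r : ℝ) + 1))))
    (H : SimpleGraph (Fin n)) (hH : qSparse q H)
    (K : H.Subgraph) (hK : Nonempty (K.coe ≃g completeGraph (Fin (r + 1)))) :
    (Set.ncard {K' : H.Subgraph |
        Nonempty (K'.coe ≃g completeGraph (Fin (r + 1))) ∧
        (K'.edgeSet ∩ K.edgeSet).Nonempty} : ℝ)
      < (Real.exp 1 * r) ^ (r + 1) := by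
  classical
  obtain ⟨hKcard, hKclique⟩ := copy_props K hK
  set 𝒮 := {K' : H.Subgraph |
      Nonempty (K'.coe ≃g completeGraph (Fin (r + 1))) ∧
      (K'.edgeSet ∩ K.edgeSet).Nonempty} with h𝒮
  have hn : 2 ≤ n := by
    have h1 : K.verts.ncard ≤ n := by
      have := Set.ncard_le_ncard (Set.subset_univ K.verts) Set.finite_univ
      simpa [Set.ncard_univ, Nat.card_eq_fintype_card] using this
    omega
  have hinjS : Set.InjOn (fun A : H.Subgraph => A.verts) 𝒮 :=
    fun A hA B hB h => copy_ext A B hA.1 hB.1 h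
  have hfin : 𝒮.Finite := Set.Finite.of_finite_image (Set.toFinite _) hinjS
  set F : Finset H.Subgraph := hfin.toFinset with hF
  have main : ∀ F' : Finset H.Subgraph, ↑F' ⊆ 𝒮 →
      (r + 2) * (K ⊔ F'.sup id).verts.ncard
        ≤ 2 * (K ⊔ F'.sup id).edgeSet.ncard + 2 * (r + 1) := by
    intro F'
    induction F' using Finset.induction_on with
    | empty =>
      intro _
      rw [Finset.sup_empty, sup_bot_eq]
      obtain ⟨-, -, he⟩ := clique_step K hKcard hKclique (⊥ : H.Subgraph)
      rw [bot_sup_eq] at he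
      simp only [SimpleGraph.Subgraph.verts_bot, SimpleGraph.Subgraph.edgeSet_bot,
        Set.inter_empty, Set.diff_empty, Set.ncard_empty, hKcard] at he
      rw [hKcard]
      have hred : 2 * 0 + (r + 1) - 1 = r := by omega
      rw [hred] at he
      nlinarith [he]
    | @insert A F' hAF IH =>
      intro hsub
      have hA𝒮 : A ∈ 𝒮 := hsub (by simp)
      have hsub' : ↑F' ⊆ 𝒮 := fun x hx => hsub (by simp [hx])
      have IH' := IH hsub'
      set U := K ⊔ F'.sup id with hU
      have hrw : K ⊔ (insert A F').sup id = U ⊔ A := by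
        rw [Finset.sup_insert, id_eq, hU, sup_comm A (F'.sup id), ← sup_assoc]
      rw [hrw]
      obtain ⟨hAcard, hAclique⟩ := copy_props A hA𝒮.1
      obtain ⟨hmd, hv, he⟩ := clique_step A hAcard hAclique U
      obtain ⟨ed, hedmem⟩ := hA𝒮.2
      revert hedmem
      induction ed using Sym2.ind with
      | _ x y =>
      intro hedmem
      have hxyA : A.Adj x y := SimpleGraph.Subgraph.mem_edgeSet.mp hedmem.1
      have hxyK : K.Adj x y := SimpleGraph.Subgraph.mem_edgeSet.mp hedmem.2
      have hxy : x ≠ y := (K.adj_sub hxyK).ne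
      have hKU : K.verts ⊆ U.verts := SimpleGraph.Subgraph.verts_mono le_sup_left
      have hm2 : 2 ≤ (A.verts ∩ U.verts).ncard := by
        have hsubp : ({x, y} : Set (Fin n)) ⊆ A.verts ∩ U.verts := by
          intro z hz
          simp only [Set.mem_insert_iff, Set.mem_singleton_iff] at hz
          rcases hz with rfl | rfl
          · exact ⟨A.edge_vert hxyA, hKU (K.edge_vert hxyK)⟩
          · exact ⟨A.edge_vert hxyA.symm, hKU (K.edge_vert hxyK.symm)⟩
        calc 2 = ({x, y} : Set (Fin n)).ncard := (Set.ncard_pair hxy).symm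
          _ ≤ _ := Set.ncard_le_ncard hsubp (Set.toFinite _)
      set m := (A.verts ∩ U.verts).ncard with hm
      set d := (A.verts \ U.verts).ncard with hd
      have hstep : d * (r + 2) ≤ d * (2 * m + d - 1) :=
        Nat.mul_le_mul_left d (by omega)
      rw [hv]
      nlinarith [IH', he, hstep]
  have hsubF : ↑F ⊆ 𝒮 := by rw [hF]; exact hfin.coe_toFinset.le
  have hinv := main F hsubF
  set U := K ⊔ F.sup id with hU
  have hKle : K ≤ U := le_sup_left
  have hUne : U.verts.Nonempty := by
    have hKne : K.verts.Nonempty := (Set.ncard_pos (Set.toFinite _)).mp (by rw [hKcard]; omega)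
    exact hKne.mono (SimpleGraph.Subgraph.verts_mono hKle)
  have hdens := density_of_qSparse hn hq0 hq hH U hUne
  have hvU : U.verts.ncard ≤ 2 * r + 1 := by
    nlinarith [hinv, hdens]
  have hcount : 𝒮.ncard ≤ 2 ^ (2 * r + 1) := by
    set W : Finset (Fin n) := (Set.toFinite U.verts).toFinset with hW
    have hWcard : W.card ≤ 2 * r + 1 := by
      rw [hW, ← Set.ncard_eq_toFinset_card _ (Set.toFinite U.verts)]
      exact hvU
    set ψ : H.Subgraph → Finset (Fin n) := fun A => (Set.toFinite A.verts).toFinset with hψ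
    have hinjψ : Set.InjOn ψ 𝒮 := by
      intro A hA B hB h
      apply hinjS hA hB
      have hcoe : ((Set.toFinite A.verts).toFinset : Set (Fin n))
          = ((Set.toFinite B.verts).toFinset : Set (Fin n)) := by
        simp only [hψ] at h
        rw [h]
      simpa [Set.Finite.coe_toFinset] using hcoe
    have himg : ψ '' 𝒮 ⊆ ↑(W.powerset) := by
      rintro t ⟨A, hA, rfl⟩
      have hAU : A.verts ⊆ U.verts := by
        have hAF : A ∈ F := hfin.mem_toFinset.mpr hA
        have hle : A ≤ U := le_trans (Finset.le_sup (f := id) hAF) le_sup_right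
        exact SimpleGraph.Subgraph.verts_mono hle
      simp only [Finset.mem_coe, Finset.mem_powerset]
      intro z hz
      rw [hψ] at hz
      simp only [Set.Finite.mem_toFinset] at hz
      rw [hW, Set.Finite.mem_toFinset]
      exact hAU hz
    calc 𝒮.ncard = (ψ '' 𝒮).ncard := (Set.ncard_image_of_injOn hinjψ).symm
      _ ≤ (↑(W.powerset) : Set (Finset (Fin n))).ncard :=
          Set.ncard_le_ncard himg (Set.toFinite _)
      _ = W.powerset.card := Set.ncard_coe_finset _
      _ = 2 ^ W.card := Finset.card_powerset W
      _ ≤ 2 ^ (2 * r + 1) := Nat.pow_le_pow_right (by omega) hWcard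
  have hcast : (𝒮.ncard : ℝ) ≤ (2:ℝ) ^ (2 * r + 1) := by exact_mod_cast hcount
  have h4 : (4:ℝ) ≤ Real.exp 1 * r := by
    have he2 : (2:ℝ) ≤ Real.exp 1 := by
      have := Real.exp_one_gt_d9
      norm_num at this
      linarith
    have hr2 : (2:ℝ) ≤ (r:ℝ) := by exact_mod_cast hr
    nlinarith
  calc (𝒮.ncard : ℝ) ≤ (2:ℝ) ^ (2 * r + 1) := hcast
    _ < (2:ℝ) ^ (2 * r + 2) := by
        apply pow_lt_pow_right₀ (by norm_num) (by omega)
    _ = (4:ℝ) ^ (r + 1) := by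
        rw [show 2 * r + 2 = 2 * (r + 1) by ring, pow_mul]
        norm_num
    _ ≤ (Real.exp 1 * r) ^ (r + 1) := pow_le_pow_left₀ (by norm_num) h4 _
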